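/- If A is a nonempty connected subset of a compact metric space X and N is a positive integer, then diam(A)/N ≤ diam_N(A). -/

import Mathlib

open Set Metric

variable {X Y : Type*}

/-- The proximal cell of `x` for `f`: points `y` with `inf_n d(f^n x, f^n y) = 0`. -/
def proxCell [MetricSpace X] (f : Equiv.Perm X) (x : X) : Set X :=
  {y | ∀ ε > 0, ∃ n : ℤ, dist ((f ^ n) x) ((f ^ n) y) < ε}

/-- `f` is `N`-distal if every proximal cell has at most `N` points. -/
def NDistal [MetricSpace X] (f : Equiv.Perm X) (N : ℕ) : Prop :=
  ∀ x : X, (proxCell f x).encard ≤ N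

/-- Minimal pairwise distance of a set. -/
noncomputable def minDist [MetricSpace X] (B : Set X) : ℝ :=
  sInf {r | ∃ x ∈ B, ∃ y ∈ B, x ≠ y ∧ r = dist x y}

/-- The `N`-diameter of `A` (sup over subsets with `N+1` elements of the minimal
pairwise distance; `sSup ∅ = 0` in `ℝ`). -/
noncomputable def diamN [MetricSpace X] (N : ℕ) (A : Set X) : ℝ :=
  sSup {r | ∃ B : Set X, B ⊆ A ∧ B.encard = N + 1 ∧ r = minDist B}

/-- `R_δ(x) = {y : d(f^i y, f^i x) < δ for some i ∈ ℤ}`. -/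
def Rball [MetricSpace X] (f : Equiv.Perm X) (δ : ℝ) (x : X) : Set X :=
  {y | ∃ i : ℤ, dist ((f ^ i) y) ((f ^ i) x) < δ}

/-- The `δ`-dynamical ball `Γ_δ(x)`. -/
def dynBall [MetricSpace X] (f : Equiv.Perm X) (δ : ℝ) (x : X) : Set X :=
  {y | ∀ n : ℤ, dist ((f ^ n) x) ((f ^ n) y) < δ}

lemma minDist_nonneg' [MetricSpace X] (B : Set X) : 0 ≤ minDist B :=
  Real.sInf_nonneg fun r ⟨_, _, _, _, _, hr⟩ => hr ▸ dist_nonneg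

lemma diamN_nonneg' [MetricSpace X] (N : ℕ) (A : Set X) : 0 ≤ diamN N A :=
  Real.sSup_nonneg fun r ⟨B, _, _, hr⟩ => hr ▸ minDist_nonneg' B

lemma diamN_bddAbove [MetricSpace X] [CompactSpace X] (N : ℕ) (hN : 0 < N) (A : Set X) :
    BddAbove {r | ∃ B : Set X, B ⊆ A ∧ B.encard = N + 1 ∧ r = minDist B} := by
  refine ⟨Metric.diam A, fun r ⟨B, hBA, hBc, hr⟩ => ?_⟩
  have hnt : B.Nontrivial := by
    obtain ⟨x, y, hx, hy, hxy⟩ := Set.one_lt_encard_iff.1 (by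
      rw [hBc]; exact_mod_cast Nat.lt_add_of_pos_left hN)
    exact ⟨x, hx, y, hy, hxy⟩
  obtain ⟨x, hx, y, hy, hxy⟩ := hnt
  have hmem : dist x y ∈ {r | ∃ x ∈ B, ∃ y ∈ B, x ≠ y ∧ r = dist x y} :=
    ⟨x, hx, y, hy, hxy, rfl⟩
  have h1 : minDist B ≤ dist x y :=
    csInf_le ⟨0, fun r ⟨_, _, _, _, _, hr⟩ => hr ▸ dist_nonneg⟩ hmem
  have h2 : dist x y ≤ Metric.diam A :=
    Metric.dist_le_diam_of_mem Metric.isBounded_of_compactSpace (hBA hx) (hBA hy)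
  exact hr ▸ h1.trans h2

theorem stmt8 [MetricSpace X] [CompactSpace X]
    (N : ℕ) (hN : 0 < N) (A : Set X) (hA : A.Nonempty) (hAc : IsConnected A) :
    Metric.diam A / N ≤ diamN N A := by
  have hNpos : (0:ℝ) < N := by exact_mod_cast hN
  rw [div_le_iff₀ hNpos]
  have key : ∀ a ∈ A, ∀ b ∈ A, dist a b ≤ diamN N A * N := by
    intro a ha b hb
    set d := dist a b with hd
    rcases le_or_gt d 0 with hd0 | hd0
    · exact hd0.trans (mul_nonneg (diamN_nonneg' N A) hNpos.le)
    · -- construct N+1 points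
      have hcont : ContinuousOn (fun x => dist a x) A := (continuous_dist.comp
        (continuous_const.prodMk continuous_id)).continuousOn
      have hIcc : Set.Icc (dist a a) (dist a b) ⊆ (fun x => dist a x) '' A :=
        hAc.isPreconnected.intermediate_value ha hb hcont
      simp only [dist_self] at hIcc
      have hchoice : ∀ k : Fin (N+1), ∃ x ∈ A, dist a x = (k : ℝ) * d / N := by
        intro k
        have hk : (k : ℝ) * d / N ∈ Set.Icc 0 d := by
          constructor
          · positivity
          · rw [div_le_iff₀ hNpos]
            have : (k : ℝ) ≤ N := by
              have := k.isLt
              exact_mod_cast Nat.lt_succ_iff.mp this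
            nlinarith
        obtain ⟨x, hx, hxd⟩ := hIcc hk
        exact ⟨x, hx, hxd⟩
      choose g hgA hgd using hchoice
      have hginj : Function.Injective g := by
        intro j k hjk
        have : (j : ℝ) * d / N = (k : ℝ) * d / N := by rw [← hgd j, ← hgd k, hjk]
        have : (j : ℝ) = k := by
          have hd' : d / N ≠ 0 := by positivity
          rw [mul_div_assoc, mul_div_assoc] at this
          exact mul_right_cancel₀ hd' this
        have : (j : ℕ) = (k : ℕ) := by exact_mod_cast this
        exact Fin.ext this
      set B := Set.range g with hB
      have hBA : B ⊆ A := by rintro _ ⟨k, rfl⟩; exact hgA k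
      have hBc : B.encard = N + 1 := by
        rw [hB, ← Set.image_univ, Set.InjOn.encard_image (hginj.injOn),
          Set.encard_univ]
        simp
      have hne01 : g 0 ≠ g 1 := fun h => by
        have := hginj h
        simp [Fin.ext_iff] at this
        omega
      have hlb : d / N ≤ minDist B := by
        have hSne : {r | ∃ x ∈ B, ∃ y ∈ B, x ≠ y ∧ r = dist x y}.Nonempty :=
          ⟨dist (g 0) (g 1), g 0, ⟨0, rfl⟩, g 1, ⟨1, rfl⟩, hne01, rfl⟩
        apply le_csInf hSne
        rintro r ⟨x, hx, y, hy, hxy, rfl⟩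
        obtain ⟨j, rfl⟩ := hx
        obtain ⟨k, rfl⟩ := hy
        have hjk : j ≠ k := fun h => hxy (by rw [h])
        have h1 : |dist a (g j) - dist a (g k)| ≤ dist (g j) (g k) := by
          have := abs_dist_sub_le (g j) (g k) a
          simpa [dist_comm] using this
        rw [hgd j, hgd k] at h1
        have h2 : |(j:ℝ) * d / N - (k:ℝ) * d / N| = |(j:ℝ) - k| * (d / N) := by
          rw [← sub_div, ← sub_mul, abs_div, abs_mul, abs_of_pos hd0,
            abs_of_pos hNpos, mul_div_assoc]
        have h3 : (1:ℝ) ≤ |(j:ℝ) - k| := by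
          have hne : (j:ℤ) - k ≠ 0 := by
            intro h
            apply hjk
            have : (j:ℤ) = k := by omega
            ext; exact_mod_cast this
          have := Int.one_le_abs hne
          have : (1:ℝ) ≤ |((j:ℤ) - k : ℤ)| := by exact_mod_cast this
          push_cast at this ⊢
          convert this using 2
        calc d / N = 1 * (d / N) := (one_mul _).symm
          _ ≤ |(j:ℝ) - k| * (d / N) := by
              apply mul_le_mul_of_nonneg_right h3 (by positivity)
          _ = |(j:ℝ)*d/N - (k:ℝ)*d/N| := h2.symm
          _ ≤ dist (g j) (g k) := h1
      have hmem : minDist B ∈ {r | ∃ B : Set X, B ⊆ A ∧ B.encard = N + 1 ∧ r = minDist B} :=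
        ⟨B, hBA, hBc, rfl⟩
      have : minDist B ≤ diamN N A := le_csSup (diamN_bddAbove N hN A) hmem
      have : d / N ≤ diamN N A := hlb.trans this
      rw [div_le_iff₀ hNpos] at this
      linarith
  exact Metric.diam_le_of_forall_dist_le
    (mul_nonneg (diamN_nonneg' N A) hNpos.le) key
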